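/- The group homomorphism Ψ̃ : (Sp(W)×Sp(W)) ⋊ C₂ → O(V,b) sending (f,g) to f⊗g and the generator ε of C₂ to the map s⊗t ↦ −t⊗s, is surjective with kernel {(id,id), (−id,−id)}, provided every element of F is a square. -/

import Mathlib

open scoped BigOperators

namespace KJ
variable (F : Type*) [Field F]

/-- The symplectic form on `W = (K3)₁` with `⟨x,y⟩ = 1`. -/
def omg (u v : Fin 2 → F) : F := u 0 * v 1 - u 1 * v 0

/-- The extension `f̃` of a map `f : W → W` to `K3 = Fe ⊕ W` fixing `e`. -/
def tilde (f : (Fin 2 → F) → (Fin 2 → F)) (u : Fin 3 → F) : Fin 3 → F :=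
  ![u 0, f ![u 1, u 2] 0, f ![u 1, u 2] 1]

end KJ
namespace KJ
variable (F : Type*) [Field F]

/-- Gram matrix of the symplectic form `⟨,⟩` on `W` in the basis `x, y`. -/
def Omg : Fin 2 → Fin 2 → F := ![![0, 1], ![-1, 0]]

/-- The symmetric bilinear form `b(s⊗t, u⊗v) = ⟨s,u⟩⟨t,v⟩` on `V = W ⊗ W`,
coordinates being matrices `Fin 2 → Fin 2 → F`. -/
def bV (A B : Fin 2 → Fin 2 → F) : F :=
  ∑ i, ∑ j, ∑ k, ∑ l, A i j * B k l * Omg F i k * Omg F j l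

end KJ
namespace KJ
variable (F : Type*) [Field F]

/-- The map `f ⊗ g` on `V = W ⊗ W` in matrix coordinates. -/
def tmap (f g : (Fin 2 → F) → (Fin 2 → F)) (A : Fin 2 → Fin 2 → F) :
    Fin 2 → Fin 2 → F :=
  fun i j => ∑ k, ∑ l, A k l * f (Pi.single k 1) i * g (Pi.single l 1) j

/-- The map `ε̂ : s ⊗ t ↦ -t ⊗ s` on `V = W ⊗ W`. -/
def epsV (A : Fin 2 → Fin 2 → F) : Fin 2 → Fin 2 → F := fun i j => -(A j i)

end KJ

namespace KJA
open Matrix KJ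
variable {F : Type*} [Field F]

lemma lin_apply (f : (Fin 2 → F) →ₗ[F] (Fin 2 → F)) (u : Fin 2 → F) :
    f u = (LinearMap.toMatrix' f).mulVec u := by
  conv_lhs => rw [← Matrix.toLin'_toMatrix' f]
  rw [Matrix.toLin'_apply]

lemma omg_mulVec (M : Matrix (Fin 2) (Fin 2) F) (u v : Fin 2 → F) :
    omg F (M.mulVec u) (M.mulVec v) = M.det * omg F u v := by
  simp [omg, Matrix.mulVec, dotProduct, Fin.sum_univ_two, Matrix.det_fin_two]
  ring

lemma sympl_of_det {M : Matrix (Fin 2) (Fin 2) F} (h : M.det = 1) (u v : Fin 2 → F) :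
    omg F (M.mulVec u) (M.mulVec v) = omg F u v := by
  rw [omg_mulVec, h, one_mul]

lemma det_of_sympl (f : (Fin 2 → F) →ₗ[F] (Fin 2 → F))
    (hf : ∀ u v, omg F (f u) (f v) = omg F u v) : (LinearMap.toMatrix' f).det = 1 := by
  have h := hf (Pi.single 0 1) (Pi.single 1 1)
  rw [lin_apply f, lin_apply f, omg_mulVec] at h
  have h1 : omg F (Pi.single 0 1) (Pi.single 1 1) = 1 := by
    simp [omg, Pi.single_apply]
  rw [h1, mul_one] at h
  exact h

lemma single_eq (k : Fin 2) :
    (Pi.single k 1 : Fin 2 → F) = fun j' => if j' = k then 1 else 0 := by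
  ext j'; simp [Pi.single_apply]

lemma tmap_eq (f g : (Fin 2 → F) →ₗ[F] (Fin 2 → F)) (A : Fin 2 → Fin 2 → F) :
    Matrix.of (tmap F ⇑f ⇑g A) =
      LinearMap.toMatrix' f * Matrix.of A * (LinearMap.toMatrix' g)ᵀ := by
  ext i j
  simp only [tmap, Matrix.of_apply, Matrix.mul_apply, Matrix.transpose_apply,
    LinearMap.toMatrix'_apply, single_eq, Fin.sum_univ_two]
  ring

lemma bV_eq (A B : Fin 2 → Fin 2 → F) :
    bV F A B = (Matrix.of A + Matrix.of B).det - (Matrix.of A).det - (Matrix.of B).det := by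
  rw [Matrix.det_fin_two, Matrix.det_fin_two, Matrix.det_fin_two]
  simp only [bV, Omg, Fin.sum_univ_two, Matrix.add_apply, Matrix.of_apply]
  norm_num [Matrix.cons_val_zero, Matrix.cons_val_one]
  ring

lemma toMatrix'_mulVecLin (M : Matrix (Fin 2) (Fin 2) F) :
    LinearMap.toMatrix' M.mulVecLin = M := by
  ext i j
  simp [LinearMap.toMatrix'_apply, Matrix.mulVecLin_apply, Matrix.mulVec, dotProduct,
    Fin.sum_univ_two, Pi.single_apply]

lemma epsV_of (A : Fin 2 → Fin 2 → F) : Matrix.of (epsV F A) = -(Matrix.of A)ᵀ := by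
  ext i j; simp [epsV]

lemma bV_self (A : Fin 2 → Fin 2 → F) : bV F A A = 2 * (Matrix.of A).det := by
  rw [bV_eq]
  simp only [Matrix.det_fin_two, Matrix.add_apply, Matrix.of_apply]
  ring

lemma det_add_one (M : Matrix (Fin 2) (Fin 2) F) : (M + 1).det = M.det + M.trace + 1 := by
  simp [Matrix.det_fin_two, Matrix.trace_fin_two, Matrix.add_apply, Matrix.one_apply]
  ring

lemma diagonalize (h2 : (2:F) ≠ 0) (w : Matrix (Fin 2) (Fin 2) F)
    (htr : w.trace = 0) (hdet : w.det = -1) :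
    ∃ P : Matrix (Fin 2) (Fin 2) F, IsUnit P.det ∧ w * P = P * !![1,0;0,-1] := by
  set a := w 0 0 with ha
  set b := w 0 1 with hb
  set c := w 1 0 with hc
  have h11 : w 1 1 = -a := by
    have := htr; rw [Matrix.trace_fin_two] at this; linear_combination this
  have habc : a * a + b * c = 1 := by
    have := hdet; rw [Matrix.det_fin_two, h11] at this; linear_combination -this
  have hw : w = !![a, b; c, -a] := by
    rw [← h11, ha, hb, hc]; exact Matrix.eta_fin_two w
  by_cases hbz : b = 0
  · have ha2 : (a - 1) * (a + 1) = 0 := by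
      rw [hbz] at habc; linear_combination habc
    rcases mul_eq_zero.mp ha2 with h1 | h1
    · have ha1 : a = 1 := by linear_combination h1
      refine ⟨!![2, 0; c, 1], ?_, ?_⟩
      · rw [Matrix.det_fin_two_of]
        simpa using isUnit_iff_ne_zero.mpr h2
      · rw [hw, hbz, ha1]
        ext i j
        fin_cases i <;> fin_cases j <;>
          simp [Matrix.mul_apply, Fin.sum_univ_two] <;> ring
    · have ha1 : a = -1 := by linear_combination h1
      refine ⟨!![0, -2; 1, c], ?_, ?_⟩
      · rw [Matrix.det_fin_two_of]
        simpa using isUnit_iff_ne_zero.mpr h2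
      · rw [hw, hbz, ha1]
        ext i j
        fin_cases i <;> fin_cases j <;>
          simp [Matrix.mul_apply, Fin.sum_univ_two] <;> ring
  · refine ⟨!![b, b; 1 - a, -(1+a)], ?_, ?_⟩
    · rw [Matrix.det_fin_two_of]
      have : b * -(1+a) - b * (1-a) = -2 * b := by ring
      rw [this]
      exact isUnit_iff_ne_zero.mpr (by
        intro h
        rcases mul_eq_zero.mp h with h' | h'
        · exact h2 (by linear_combination -h')
        · exact hbz h')
    · rw [hw]
      ext i j
      fin_cases i <;> fin_cases j <;>
        (simp [Matrix.mul_apply, Fin.sum_univ_two]; first | ring1 | linear_combination habc | linear_combination -habc)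

lemma main (h2 : (2:F) ≠ 0) (φ : Matrix (Fin 2) (Fin 2) F →ₗ[F] Matrix (Fin 2) (Fin 2) F)
    (hdet : ∀ A, (φ A).det = A.det) :
    ∃ L R : Matrix (Fin 2) (Fin 2) F, L.det * R.det = 1 ∧
      ((∀ A, φ A = L * A * R) ∨ (∀ A, φ A = L * Aᵀ * R)) := by
  classical
  set Q : Matrix (Fin 2) (Fin 2) F := φ 1 with hQdef
  have hQdet : Q.det = 1 := by simpa using hdet 1
  have hQu : IsUnit Q.det := hQdet ▸ isUnit_one
  set ψ : Matrix (Fin 2) (Fin 2) F → Matrix (Fin 2) (Fin 2) F := fun A => Q⁻¹ * φ A with hψdef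
  have hψ1 : ψ 1 = 1 := Matrix.nonsing_inv_mul Q hQu
  have hψdet : ∀ A, (ψ A).det = A.det := fun A => by
    rw [hψdef]
    simp only [Matrix.det_mul, Matrix.det_nonsing_inv, hQdet, hdet A, inv_one, one_mul,
      Ring.inverse_one]
  have hψadd : ∀ A B, ψ (A + B) = ψ A + ψ B := fun A B => by
    simp only [hψdef, map_add, mul_add]
  have hψsmul : ∀ (c : F) A, ψ (c • A) = c • ψ A := fun c A => by
    rw [hψdef]; simp only [LinearMap.map_smul, Matrix.mul_smul]
  have hψb : ∀ A B, (ψ A + ψ B).det = (A + B).det := fun A B => by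
    rw [← hψadd, hψdet]
  have hψtr : ∀ A, (ψ A).trace = A.trace := by
    intro A
    have h := hψb A 1
    rw [hψ1, det_add_one, det_add_one, hψdet] at h
    linear_combination h
  -- diagonalize image of H
  set Hm : Matrix (Fin 2) (Fin 2) F := !![1,0;0,-1] with hHm
  set w : Matrix (Fin 2) (Fin 2) F := ψ Hm with hwdef
  have hwtr : w.trace = 0 := by
    rw [hwdef, hψtr, hHm, Matrix.trace_fin_two]
    norm_num
  have hwdet : w.det = -1 := by
    rw [hwdef, hψdet, hHm, Matrix.det_fin_two_of]
    norm_num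
  obtain ⟨P, hPu, hPw⟩ := diagonalize h2 w hwtr hwdet
  have hPP := Matrix.mul_nonsing_inv P hPu
  have hPP' := Matrix.nonsing_inv_mul P hPu
  set ψ₂ : Matrix (Fin 2) (Fin 2) F → Matrix (Fin 2) (Fin 2) F :=
    fun A => P⁻¹ * ψ A * P with hψ₂def
  have h21 : ψ₂ 1 = 1 := by rw [hψ₂def]; simp only [hψ1, mul_one, hPP']
  have h2H : ψ₂ Hm = Hm := by
    show P⁻¹ * ψ Hm * P = Hm
    rw [← hwdef, mul_assoc, hPw, ← mul_assoc, hPP', one_mul]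
  have h2det : ∀ A, (ψ₂ A).det = A.det := fun A => by
    show (P⁻¹ * ψ A * P).det = A.det
    rw [Matrix.det_mul, Matrix.det_mul, Matrix.det_nonsing_inv, hψdet]
    rw [Ring.inverse_eq_inv', mul_comm, ← mul_assoc, mul_inv_cancel₀ hPu.ne_zero, one_mul]
  have h2tr : ∀ A, (ψ₂ A).trace = A.trace := fun A => by
    show (P⁻¹ * ψ A * P).trace = A.trace
    rw [Matrix.trace_mul_cycle]
    rw [show P * P⁻¹ * ψ A = (P * P⁻¹) * ψ A from rfl, hPP, one_mul, hψtr]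
  have h2add : ∀ A B, ψ₂ (A + B) = ψ₂ A + ψ₂ B := fun A B => by
    show P⁻¹ * ψ (A+B) * P = _
    rw [hψadd, mul_add, add_mul]
  have h2smul : ∀ (c : F) A, ψ₂ (c • A) = c • ψ₂ A := fun c A => by
    show P⁻¹ * ψ (c • A) * P = _
    rw [hψsmul, Matrix.mul_smul, Matrix.smul_mul]
  have h2b : ∀ A B, (ψ₂ A + ψ₂ B).det = (A + B).det := fun A B => by
    rw [← h2add, h2det]
  -- the off-diagonal images
  have hoff : ∀ Z : Matrix (Fin 2) (Fin 2) F, Z.trace = 0 → Z.det = 0 →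
      (Z + Hm).det = -1 → Z 0 0 = 0 ∧ Z 1 1 = 0 := by
    intro Z htr hdz hdh
    rw [Matrix.trace_fin_two] at htr
    rw [Matrix.det_fin_two] at hdz
    rw [Matrix.det_fin_two] at hdh
    simp only [Matrix.add_apply, hHm] at hdh
    norm_num [Matrix.cons_val_zero, Matrix.cons_val_one] at hdh
    -- hdh : (Z 0 0 + 1) * (Z 1 1 - 1) - Z 0 1 * Z 1 0 = -1
    have h00 : 2 * Z 0 0 = 0 := by linear_combination htr - hdh + hdz
    have : Z 0 0 = 0 := by
      rcases mul_eq_zero.mp h00 with h | h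
      · exact absurd h h2
      · exact h
    exact ⟨this, by linear_combination htr - this⟩
  -- images of the off-diagonal basis matrices
  set Xm : Matrix (Fin 2) (Fin 2) F := !![0,1;0,0] with hXm
  set Ym : Matrix (Fin 2) (Fin 2) F := !![0,0;1,0] with hYm
  set E0 : Matrix (Fin 2) (Fin 2) F := !![1,0;0,0] with hE0def
  set E1 : Matrix (Fin 2) (Fin 2) F := !![0,0;0,1] with hE1def
  set M : Matrix (Fin 2) (Fin 2) F := ψ₂ Xm with hMdef
  set N : Matrix (Fin 2) (Fin 2) F := ψ₂ Ym with hNdef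
  have hMz : M 0 0 = 0 ∧ M 1 1 = 0 := by
    apply hoff
    · rw [hMdef, h2tr, hXm, Matrix.trace_fin_two]; norm_num
    · rw [hMdef, h2det, hXm, Matrix.det_fin_two_of]; norm_num
    · rw [hMdef, ← h2H, h2b, hXm, hHm, Matrix.det_fin_two]
      norm_num [Matrix.add_apply]
  have hNz : N 0 0 = 0 ∧ N 1 1 = 0 := by
    apply hoff
    · rw [hNdef, h2tr, hYm, Matrix.trace_fin_two]; norm_num
    · rw [hNdef, h2det, hYm, Matrix.det_fin_two_of]; norm_num
    · rw [hNdef, ← h2H, h2b, hYm, hHm, Matrix.det_fin_two]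
      norm_num [Matrix.add_apply]
  have hxx' : M 0 1 * M 1 0 = 0 := by
    have hdM : M.det = 0 := by rw [hMdef, h2det, hXm, Matrix.det_fin_two_of]; norm_num
    rw [Matrix.det_fin_two, hMz.1, hMz.2] at hdM
    linear_combination -hdM
  have hyy' : N 0 1 * N 1 0 = 0 := by
    have hdN : N.det = 0 := by rw [hNdef, h2det, hYm, Matrix.det_fin_two_of]; norm_num
    rw [Matrix.det_fin_two, hNz.1, hNz.2] at hdN
    linear_combination -hdN
  have hMN : M 0 1 * N 1 0 + N 0 1 * M 1 0 = 1 := by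
    have h := h2b Xm Ym
    rw [← hMdef, ← hNdef, Matrix.det_fin_two, Matrix.det_fin_two] at h
    simp only [Matrix.add_apply, hMz.1, hMz.2, hNz.1, hNz.2, hXm, hYm] at h
    norm_num at h
    first
      | linear_combination h - hxx' - hyy'
      | linear_combination -h - hxx' - hyy'
      | linear_combination h + hxx' + hyy'
      | linear_combination -h + hxx' + hyy'
  -- decomposition over the standard basis
  have hdecomp : ∀ A : Matrix (Fin 2) (Fin 2) F,
      A = A 0 0 • E0 + A 0 1 • Xm + A 1 0 • Ym + A 1 1 • E1 := by
    intro A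
    ext i j
    fin_cases i <;> fin_cases j <;>
      simp [hXm, hYm, hE0def, hE1def]
  have he0 : (2:F) • E0 = (1 : Matrix (Fin 2) (Fin 2) F) + Hm := by
    ext i j
    fin_cases i <;> fin_cases j <;>
      simp [hE0def, hHm, Matrix.one_apply, Matrix.add_apply] <;> norm_num
  have hE0i : ψ₂ E0 = E0 := by
    have h := h2smul 2 E0
    rw [he0, h2add, h21, h2H, ← he0] at h
    exact (smul_right_injective _ h2 h).symm
  have he1 : (2:F) • E1 + Hm = (1 : Matrix (Fin 2) (Fin 2) F) := by
    ext i j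
    fin_cases i <;> fin_cases j <;>
      simp [hE1def, hHm, Matrix.one_apply, Matrix.add_apply] <;> norm_num
  have hE1i : ψ₂ E1 = E1 := by
    have h := h2add ((2:F) • E1) Hm
    rw [he1, h21, h2H, h2smul] at h
    have h' : (2:F) • E1 + Hm = (2:F) • ψ₂ E1 + Hm := by rw [he1, h]
    have := add_right_cancel h'
    exact (smul_right_injective _ h2 this).symm
  have hform : ∀ A : Matrix (Fin 2) (Fin 2) F,
      ψ₂ A = A 0 0 • E0 + A 0 1 • M + A 1 0 • N + A 1 1 • E1 := by
    intro A
    conv_lhs => rw [hdecomp A]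
    rw [h2add, h2add, h2add, h2smul, h2smul, h2smul, h2smul, hE0i, hE1i, ← hMdef, ← hNdef]
  -- case analysis
  obtain ⟨D, D', hDD', hDcase⟩ :
      ∃ D D' : Matrix (Fin 2) (Fin 2) F, D * D' = 1 ∧
        ((∀ A, ψ₂ A = D * A * D') ∨ (∀ A, ψ₂ A = D * Aᵀ * D')) := by
    by_cases hx : M 0 1 = 0
    · -- transpose case
      have hyx' : N 0 1 * M 1 0 = 1 := by linear_combination hMN - N 1 0 * hx
      have hy'0 : N 1 0 = 0 := by
        rcases mul_eq_zero.mp hyy' with h | h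
        · exfalso
          rw [h, zero_mul] at hyx'
          exact zero_ne_one hyx'
        · exact h
      have hMeta : M = !![0, 0; M 1 0, 0] := by
        ext i j
        fin_cases i <;> fin_cases j <;> simp [hMz.1, hMz.2, hx]
      have hNeta : N = !![0, N 0 1; 0, 0] := by
        ext i j
        fin_cases i <;> fin_cases j <;> simp [hNz.1, hNz.2, hy'0]
      refine ⟨!![1,0;0,M 1 0], !![1,0;0,N 0 1], ?_, Or.inr ?_⟩
      · ext i j
        fin_cases i <;> fin_cases j <;>
          simp [Matrix.mul_apply, Fin.sum_univ_two, Matrix.one_apply] <;>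
          first | ring1 | linear_combination hyx' | linear_combination -hyx'
      · intro A
        rw [hform A, hMeta, hNeta]
        ext i j
        fin_cases i <;> fin_cases j <;>
          simp only [Matrix.add_apply, Matrix.smul_apply, Matrix.mul_apply, Matrix.transpose_apply,
            Fin.sum_univ_two, hE0def, hE1def, Matrix.cons_val', Matrix.cons_val_zero,
            Matrix.cons_val_one, Matrix.head_cons, Matrix.head_fin_const, Matrix.empty_val',
            Matrix.cons_val_fin_one, smul_eq_mul, Fin.mk_zero, Fin.mk_one, Matrix.of_apply] <;>
          first
            | ring1
            | linear_combination A 1 1 * hyx'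
            | linear_combination (-(A 1 1)) * hyx'
    · -- direct case
      have hx'0 : M 1 0 = 0 := (mul_eq_zero.mp hxx').resolve_left hx
      have hxy' : M 0 1 * N 1 0 = 1 := by linear_combination hMN - N 0 1 * hx'0
      have hy0 : N 0 1 = 0 := by
        rcases mul_eq_zero.mp hyy' with h | h
        · exact h
        · exfalso
          rw [h, mul_zero] at hxy'
          exact zero_ne_one hxy'
      have hMeta : M = !![0, M 0 1; 0, 0] := by
        ext i j
        fin_cases i <;> fin_cases j <;> simp [hMz.1, hMz.2, hx'0]
      have hNeta : N = !![0, 0; N 1 0, 0] := by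
        ext i j
        fin_cases i <;> fin_cases j <;> simp [hNz.1, hNz.2, hy0]
      refine ⟨!![M 0 1,0;0,1], !![N 1 0,0;0,1], ?_, Or.inl ?_⟩
      · ext i j
        fin_cases i <;> fin_cases j <;>
          simp [Matrix.mul_apply, Fin.sum_univ_two, Matrix.one_apply] <;>
          first | ring1 | linear_combination hxy' | linear_combination -hxy'
      · intro A
        rw [hform A, hMeta, hNeta]
        ext i j
        fin_cases i <;> fin_cases j <;>
          simp only [Matrix.add_apply, Matrix.smul_apply, Matrix.mul_apply, Matrix.transpose_apply,
            Fin.sum_univ_two, hE0def, hE1def, Matrix.cons_val', Matrix.cons_val_zero,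
            Matrix.cons_val_one, Matrix.head_cons, Matrix.head_fin_const, Matrix.empty_val',
            Matrix.cons_val_fin_one, smul_eq_mul, Fin.mk_zero, Fin.mk_one, Matrix.of_apply] <;>
          first
            | ring1
            | linear_combination A 0 0 * hxy'
            | linear_combination (-(A 0 0)) * hxy'
            | linear_combination A 1 0 * hxy'
            | linear_combination (-(A 1 0)) * hxy'
  -- assemble
  have hQQ := Matrix.mul_nonsing_inv Q hQu
  have hfφ : ∀ A, φ A = Q * (P * ψ₂ A * P⁻¹) := by
    intro A
    show φ A = Q * (P * (P⁻¹ * ψ A * P) * P⁻¹)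
    simp only [← Matrix.mul_assoc]
    rw [Matrix.mul_nonsing_inv_cancel_right _ _ hPu,
      Matrix.mul_nonsing_inv_cancel_right _ _ hPu]
    show φ A = Q * (Q⁻¹ * φ A)
    rw [← Matrix.mul_assoc, hQQ, one_mul]
  rcases hDcase with hD | hD
  · have hφ : ∀ A, φ A = (Q * P * D) * A * (D' * P⁻¹) := fun A => by
      rw [hfφ A, hD A]; simp only [Matrix.mul_assoc]
    refine ⟨Q * P * D, D' * P⁻¹, ?_, Or.inl hφ⟩
    have h1 := hdet 1
    rw [hφ 1, mul_one, Matrix.det_mul, Matrix.det_one] at h1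
    exact h1
  · have hφ : ∀ A, φ A = (Q * P * D) * Aᵀ * (D' * P⁻¹) := fun A => by
      rw [hfφ A, hD A]; simp only [Matrix.mul_assoc]
    refine ⟨Q * P * D, D' * P⁻¹, ?_, Or.inr hφ⟩
    have h1 := hdet 1
    rw [hφ 1, Matrix.transpose_one, mul_one, Matrix.det_mul, Matrix.det_one] at h1
    exact h1


end KJA

open KJ in
/-- The homomorphism `Ψ̃ : (Sp(W) × Sp(W)) ⋊ C₂ → O(V,b)`,
`(f,g) ↦ f⊗g`, `ε ↦ (s⊗t ↦ -t⊗s)`, is well defined (its values are orthogonal),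
surjective, and has kernel `{(id,id), (-id,-id)}`, provided `F² = F`. -/
theorem wreath_onto_orthogonal (F : Type*) [Field F] (h2 : (2:F) ≠ 0)
    (hsq : ∀ c : F, ∃ d : F, d * d = c) :
    -- values of Ψ̃ lie in O(V,b)
    (∀ f g : (Fin 2 → F) →ₗ[F] (Fin 2 → F),
      (∀ u v, omg F (f u) (f v) = omg F u v) →
      (∀ u v, omg F (g u) (g v) = omg F u v) →
      (∀ A B, bV F (tmap F ⇑f ⇑g A) (tmap F ⇑f ⇑g B) = bV F A B)) ∧
    (∀ A B, bV F (epsV F A) (epsV F B) = bV F A B) ∧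
    -- surjectivity
    (∀ φ : (Fin 2 → Fin 2 → F) →ₗ[F] (Fin 2 → Fin 2 → F), Function.Bijective φ →
      (∀ A B, bV F (φ A) (φ B) = bV F A B) →
      ∃ f g : (Fin 2 → F) →ₗ[F] (Fin 2 → F),
        (∀ u v, omg F (f u) (f v) = omg F u v) ∧
        (∀ u v, omg F (g u) (g v) = omg F u v) ∧
        (⇑φ = tmap F ⇑f ⇑g ∨ ⇑φ = fun A => tmap F ⇑f ⇑g (epsV F A))) ∧
    -- kernel
    (∀ f g : (Fin 2 → F) →ₗ[F] (Fin 2 → F),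
      (∀ u v, omg F (f u) (f v) = omg F u v) →
      (∀ u v, omg F (g u) (g v) = omg F u v) →
      (((∀ A, tmap F ⇑f ⇑g A = A) ↔
          ((∀ u, f u = u) ∧ (∀ u, g u = u)) ∨ ((∀ u, f u = -u) ∧ (∀ u, g u = -u))) ∧
        ¬ (∀ A, tmap F ⇑f ⇑g (epsV F A) = A))) := by
  classical
  open Matrix KJA in
  refine ⟨?_, ?_, ?_, ?_⟩
  · -- part 1 : tensor maps are orthogonal
    intro f g hf hg A B
    have hMf := det_of_sympl f hf
    have hMg := det_of_sympl g hg
    rw [bV_eq, bV_eq, tmap_eq, tmap_eq]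
    have hsum : LinearMap.toMatrix' f * Matrix.of A * (LinearMap.toMatrix' g)ᵀ +
        LinearMap.toMatrix' f * Matrix.of B * (LinearMap.toMatrix' g)ᵀ =
        LinearMap.toMatrix' f * (Matrix.of A + Matrix.of B) * (LinearMap.toMatrix' g)ᵀ := by
      rw [Matrix.mul_add, Matrix.add_mul]
    rw [hsum]
    simp only [Matrix.det_mul, Matrix.det_transpose, hMf, hMg, one_mul, mul_one]
  · -- part 2 : epsV is orthogonal
    intro A B
    have key : ∀ C : Matrix (Fin 2) (Fin 2) F, (-(Cᵀ)).det = C.det := fun C => by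
      rw [Matrix.det_neg, Matrix.det_transpose]
      norm_num
    rw [bV_eq, bV_eq, epsV_of, epsV_of]
    have hsum : -(Matrix.of A)ᵀ + -(Matrix.of B)ᵀ = -((Matrix.of A + Matrix.of B)ᵀ) := by
      rw [Matrix.transpose_add, neg_add]
    rw [hsum, key, key, key]
  · -- part 3 : surjectivity
    intro φ hbij hb
    have hdet : ∀ A : Matrix (Fin 2) (Fin 2) F, (Matrix.of (φ A)).det = A.det := by
      intro A
      have h := hb A A
      rw [bV_self, bV_self (F := F) A] at h
      exact mul_left_cancel₀ h2 h
    obtain ⟨L, R, hLR, hcase⟩ := main h2 φ hdet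
    obtain ⟨d, hd⟩ := hsq L.det
    have hLdet : L.det ≠ 0 := fun h => by rw [h, zero_mul] at hLR; exact zero_ne_one hLR
    have hdne : d ≠ 0 := fun h => hLdet (by rw [← hd, h, mul_zero])
    have hgdet : ((d • Rᵀ : Matrix (Fin 2) (Fin 2) F)).det = 1 := by
      rw [Matrix.det_smul, Matrix.det_transpose]
      simp only [Fintype.card_fin]
      linear_combination R.det * hd + hLR
    rcases hcase with hφ | hφ
    · refine ⟨(d⁻¹ • L).mulVecLin, (d • Rᵀ).mulVecLin, ?_, ?_, Or.inl ?_⟩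
      · intro u v
        rw [Matrix.mulVecLin_apply, Matrix.mulVecLin_apply]
        apply sympl_of_det
        rw [Matrix.det_smul]
        simp only [Fintype.card_fin]
        rw [← hd]
        field_simp
      · intro u v
        rw [Matrix.mulVecLin_apply, Matrix.mulVecLin_apply]
        exact sympl_of_det hgdet u v
      · funext A
        show φ A = Matrix.of (tmap F ⇑(d⁻¹ • L).mulVecLin ⇑(d • Rᵀ).mulVecLin A)
        rw [tmap_eq, toMatrix'_mulVecLin, toMatrix'_mulVecLin]
        refine (hφ A).trans ?_
        rw [Matrix.transpose_smul, Matrix.transpose_transpose]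
        rw [Matrix.smul_mul, Matrix.smul_mul, Matrix.mul_smul, smul_smul,
          inv_mul_cancel₀ hdne, one_smul]
        rfl
    · refine ⟨(-(d⁻¹ • L)).mulVecLin, (d • Rᵀ).mulVecLin, ?_, ?_, Or.inr ?_⟩
      · intro u v
        rw [Matrix.mulVecLin_apply, Matrix.mulVecLin_apply]
        apply sympl_of_det
        rw [Matrix.det_neg, Matrix.det_smul]
        simp only [Fintype.card_fin]
        rw [← hd]
        field_simp
      · intro u v
        rw [Matrix.mulVecLin_apply, Matrix.mulVecLin_apply]
        exact sympl_of_det hgdet u v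
      · funext A
        show φ A = Matrix.of (tmap F ⇑(-(d⁻¹ • L)).mulVecLin ⇑(d • Rᵀ).mulVecLin (epsV F A))
        rw [tmap_eq, toMatrix'_mulVecLin, toMatrix'_mulVecLin, epsV_of]
        refine (hφ A).trans ?_
        rw [Matrix.transpose_smul, Matrix.transpose_transpose]
        rw [Matrix.neg_mul, Matrix.mul_neg, neg_neg]
        rw [Matrix.smul_mul, Matrix.smul_mul, Matrix.mul_smul, smul_smul,
          inv_mul_cancel₀ hdne, one_smul]
        rfl
  · -- part 4 : kernel
    intro f g hf hg
    set Mf := LinearMap.toMatrix' f with hMfdef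
    set Mg := LinearMap.toMatrix' g with hMgdef
    have hdf : Mf.det = 1 := det_of_sympl f hf
    have hdg : Mg.det = 1 := det_of_sympl g hg
    refine ⟨⟨?_, ?_⟩, ?_⟩
    · -- kernel, forward direction
      intro h
      have hA : ∀ B : Matrix (Fin 2) (Fin 2) F, Mf * B * Mgᵀ = B := fun B =>
        (tmap_eq f g B).symm.trans (h B)
      have h1 : Mf * Mgᵀ = 1 := by have := hA 1; rwa [mul_one] at this
      have h1' : Mgᵀ * Mf = 1 := mul_eq_one_comm.mp h1
      have hcomm : ∀ B : Matrix (Fin 2) (Fin 2) F, Mf * B = B * Mf := by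
        intro B
        calc Mf * B = Mf * B * (Mgᵀ * Mf) := by rw [h1', mul_one]
          _ = (Mf * B * Mgᵀ) * Mf := by simp only [Matrix.mul_assoc]
          _ = B * Mf := by rw [hA B]
      have e1 := hcomm !![0,1;0,0]
      have e2 := hcomm !![0,0;1,0]
      have hc0 : Mf 1 0 = 0 := by
        have := Matrix.ext_iff.mpr e1 0 0
        simpa [Matrix.mul_apply, Fin.sum_univ_two] using this.symm
      have hb0 : Mf 0 1 = 0 := by
        have := Matrix.ext_iff.mpr e2 0 0
        simpa [Matrix.mul_apply, Fin.sum_univ_two] using this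
      have had : Mf 0 0 = Mf 1 1 := by
        have := Matrix.ext_iff.mpr e1 0 1
        simpa [Matrix.mul_apply, Fin.sum_univ_two] using this
      have hMfeta : Mf = Mf 0 0 • (1 : Matrix (Fin 2) (Fin 2) F) := by
        ext i j
        fin_cases i <;> fin_cases j <;>
          simp [Matrix.one_apply, hb0, hc0, had.symm]
      have ha2 : Mf 0 0 * Mf 0 0 = 1 := by
        rw [Matrix.det_fin_two] at hdf
        linear_combination hdf + Mf 0 0 * had + Mf 1 0 * hb0
      have hMgT : Mgᵀ = (Mf 0 0)⁻¹ • (1 : Matrix (Fin 2) (Fin 2) F) := by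
        have hane : Mf 0 0 ≠ 0 := by
          intro hz
          rw [hz, zero_mul] at ha2
          exact zero_ne_one ha2
        rw [hMfeta, Matrix.smul_mul, Matrix.one_mul] at h1
        calc Mgᵀ = (Mf 0 0)⁻¹ • (Mf 0 0 • Mgᵀ) := by
              rw [smul_smul, inv_mul_cancel₀ hane, one_smul]
          _ = (Mf 0 0)⁻¹ • (1 : Matrix (Fin 2) (Fin 2) F) := by rw [h1]
      have hcases : Mf 0 0 = 1 ∨ Mf 0 0 = -1 := by
        have h' : (Mf 0 0 - 1) * (Mf 0 0 + 1) = 0 := by linear_combination ha2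
        rcases mul_eq_zero.mp h' with h' | h'
        · left; linear_combination h'
        · right; linear_combination h'
      rcases hcases with ha1 | ha1
      · left
        constructor
        · intro u
          rw [lin_apply f u, ← hMfdef, hMfeta, ha1, one_smul, Matrix.one_mulVec]
        · intro u
          have hMg1 : Mg = 1 := by
            have : Mgᵀ = 1 := by rw [hMgT, ha1]; norm_num
            rw [← Matrix.transpose_transpose Mg, this, Matrix.transpose_one]
          rw [lin_apply g u, ← hMgdef, hMg1, Matrix.one_mulVec]
      · right
        constructor
        · intro u
          rw [lin_apply f u, ← hMfdef, hMfeta, ha1, Matrix.smul_mulVec,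
            Matrix.one_mulVec, neg_smul, one_smul]
        · intro u
          have hMg1 : Mg = -1 := by
            have hT : Mgᵀ = -1 := by
              rw [hMgT, ha1]
              norm_num
            have := congrArg Matrix.transpose hT
            rw [Matrix.transpose_transpose] at this
            rw [this, Matrix.transpose_neg, Matrix.transpose_one]
          rw [lin_apply g u, ← hMgdef, hMg1, Matrix.neg_mulVec, Matrix.one_mulVec]
    · -- kernel, backward direction
      rintro (⟨hfu, hgu⟩ | ⟨hfu, hgu⟩) <;> intro A <;> funext i j <;>
        simp only [tmap, hfu, hgu, Fin.sum_univ_two, Pi.neg_apply, neg_mul, mul_neg, neg_neg] <;>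
        fin_cases i <;> fin_cases j <;>
        simp [Pi.single_apply] <;> ring
    · -- epsilon is not in the kernel
      intro h
      have hA : ∀ B : Matrix (Fin 2) (Fin 2) F, Mf * (-Bᵀ) * Mgᵀ = B := by
        intro B
        have ht := tmap_eq f g (epsV F B)
        rw [epsV_of (F := F) B] at ht
        exact ht.symm.trans (h B)
      have hMfu : IsUnit Mf.det := hdf ▸ isUnit_one
      have h1 : Mf * Mgᵀ = -1 := by
        have h0 := hA 1
        rw [Matrix.transpose_one] at h0
        have h' : -(Mf * Mgᵀ) = 1 := by
          rw [← h0]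
          simp only [Matrix.mul_neg, Matrix.neg_mul, Matrix.mul_one]
        exact neg_eq_iff_eq_neg.mp h'
      have h1' : Mgᵀ * Mf = -1 := by
        have hh : Mf * (-Mgᵀ) = 1 := by rw [Matrix.mul_neg, h1, neg_neg]
        have hh' := mul_eq_one_comm.mp hh
        calc Mgᵀ * Mf = -(-Mgᵀ * Mf) := by rw [Matrix.neg_mul, neg_neg]
          _ = -1 := by rw [hh']
      have tE01 : ((!![0,1;0,0] : Matrix (Fin 2) (Fin 2) F))ᵀ = !![0,0;1,0] := by
        ext i j; fin_cases i <;> fin_cases j <;> simp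
      have tE10 : ((!![0,0;1,0] : Matrix (Fin 2) (Fin 2) F))ᵀ = !![0,1;0,0] := by
        ext i j; fin_cases i <;> fin_cases j <;> simp
      have tE11 : ((!![0,0;0,1] : Matrix (Fin 2) (Fin 2) F))ᵀ = !![0,0;0,1] := by
        ext i j; fin_cases i <;> fin_cases j <;> simp
      have f1 : Mf * !![0,0;1,0] * Mgᵀ = -(!![0,1;0,0] : Matrix (Fin 2) (Fin 2) F) := by
        have := hA !![0,1;0,0]
        rw [tE01, Matrix.mul_neg, Matrix.neg_mul] at this
        exact neg_eq_iff_eq_neg.mp this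
      have f2 : Mf * !![0,1;0,0] * Mgᵀ = -(!![0,0;1,0] : Matrix (Fin 2) (Fin 2) F) := by
        have := hA !![0,0;1,0]
        rw [tE10, Matrix.mul_neg, Matrix.neg_mul] at this
        exact neg_eq_iff_eq_neg.mp this
      have f3 : Mf * !![0,0;0,1] * Mgᵀ = -(!![0,0;0,1] : Matrix (Fin 2) (Fin 2) F) := by
        have := hA !![0,0;0,1]
        rw [tE11, Matrix.mul_neg, Matrix.neg_mul] at this
        exact neg_eq_iff_eq_neg.mp this
      have pE : (!![0,0;1,0] : Matrix (Fin 2) (Fin 2) F) * !![0,1;0,0] = !![0,0;0,1] := by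
        ext i j
        fin_cases i <;> fin_cases j <;> simp [Matrix.mul_apply, Fin.sum_univ_two]
      have pF : (!![0,1;0,0] : Matrix (Fin 2) (Fin 2) F) * !![0,0;1,0] = !![1,0;0,0] := by
        ext i j
        fin_cases i <;> fin_cases j <;> simp [Matrix.mul_apply, Fin.sum_univ_two]
      have step1 : (Mf * !![0,0;1,0] * Mgᵀ) * (Mf * !![0,1;0,0] * Mgᵀ)
          = -(Mf * (!![0,0;1,0] * !![0,1;0,0]) * Mgᵀ) := by
        calc (Mf * !![0,0;1,0] * Mgᵀ) * (Mf * !![0,1;0,0] * Mgᵀ)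
            = Mf * !![0,0;1,0] * (Mgᵀ * Mf) * (!![0,1;0,0] * Mgᵀ) := by
              simp only [Matrix.mul_assoc]
          _ = -(Mf * (!![0,0;1,0] * !![0,1;0,0]) * Mgᵀ) := by
              rw [h1']
              simp only [Matrix.mul_neg, Matrix.neg_mul, Matrix.mul_one]
              simp only [Matrix.mul_assoc]
      have contra : (!![1,0;0,0] : Matrix (Fin 2) (Fin 2) F) = !![0,0;0,1] := by
        have e : (-(!![0,1;0,0] : Matrix (Fin 2) (Fin 2) F)) * (-(!![0,0;1,0] : Matrix (Fin 2) (Fin 2) F))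
            = !![0,0;0,1] := by
          rw [← f1, ← f2, step1, pE, f3, neg_neg]
        rw [Matrix.neg_mul, Matrix.mul_neg, neg_neg, pF] at e
        exact e
      have := Matrix.ext_iff.mpr contra 0 0
      norm_num at this
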